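/- For every integer D ≥ 1, the series Σ_{p≥0} C_p^{(D+1)} g_c^p, with C_p^{(D+1)} := (1/((D+1)p+1))·binom((D+1)p+1, p) and g_c := D^D/(D+1)^{D+1}, converges and its sum equals (D+1)/D. -/

import Mathlib

open Finset Filter Topology

/-- The Fuss–Catalan number `C_p^(D+1) = (1/((D+1)p+1))·binom((D+1)p+1, p)`, as a real number. -/
noncomputable def fussCatalan (D p : ℕ) : ℝ :=
  (1 / (((D + 1) * p + 1 : ℕ) : ℝ)) * (Nat.choose ((D + 1) * p + 1) p : ℝ)

lemma fussCatalan_nonneg (D p : ℕ) : 0 ≤ fussCatalan D p := by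
  unfold fussCatalan; positivity

noncomputable def phi (D : ℕ) (x : ℝ) : ℕ → ℕ → ℝ
  | 0, j => if j = 0 then 1 else 0
  | s+1, j => if j = 0 then 0 else (1-x) * phi D x s (j-1) + x * phi D x s (j+D)

lemma phi_zero (D : ℕ) (x : ℝ) (j : ℕ) : phi D x 0 j = if j = 0 then 1 else 0 := rfl
lemma phi_succ (D : ℕ) (x : ℝ) (s j : ℕ) :
    phi D x (s+1) j = if j = 0 then 0 else (1-x) * phi D x s (j-1) + x * phi D x s (j+D) := rfl
lemma phi_succ_zero (D : ℕ) (x : ℝ) (s : ℕ) : phi D x (s+1) 0 = 0 := by simp [phi_succ]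

lemma phi_spec (D : ℕ) (x : ℝ) :
    ∀ s j, 1 ≤ j →
      ((∀ k, s ≠ (D+1)*k + j) → phi D x s j = 0) ∧
      (∀ k, s = (D+1)*k + j →
        phi D x s j = ((j : ℝ)/(s : ℝ)) * (Nat.choose s k : ℝ) * x^k * (1-x)^(s-k)) := by
  intro s
  induction s with
  | zero =>
    intro j hj
    refine ⟨fun _ => by rw [phi_zero]; simp [Nat.one_le_iff_ne_zero.mp hj], fun k hk => by omega⟩
  | succ s ih =>
    intro j hj
    have hjne : j ≠ 0 := by omega
    rw [phi_succ, if_neg hjne]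
    constructor
    · -- vanishing clause
      intro h
      have h2 : phi D x s (j+D) = 0 := by
        apply (ih (j+D) (by omega)).1
        intro k hk
        exact h (k+1) (by rw [hk]; ring)
      rw [h2, mul_zero, add_zero]
      rcases Nat.eq_or_lt_of_le hj with hj1 | hj2
      · -- j = 1
        rw [← hj1]
        rcases Nat.eq_zero_or_pos s with hs | hs
        · exact absurd (by simp [hs, ← hj1]) (h 0)
        · obtain ⟨t, ht⟩ : ∃ t, s = t+1 := ⟨s-1, by omega⟩
          rw [ht]
          simp [phi_succ_zero]
      · -- j ≥ 2
        have h1 : phi D x s (j-1) = 0 := by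
          apply (ih (j-1) (by omega)).1
          intro k hk
          exact h k (by omega)
        rw [h1]; ring
    · -- closed form clause
      intro k hk
      rcases Nat.eq_zero_or_pos k with hk0 | hkpos
      · -- k = 0 : s + 1 = j
        subst hk0
        have hsj : s + 1 = j := by simpa using hk
        have h2 : phi D x s (j+D) = 0 := by
          apply (ih (j+D) (by omega)).1
          intro k' hk'
          have : (D+1)*k' + (j+D) ≥ j + D := by omega
          omega
        rw [h2, mul_zero, add_zero]
        rcases Nat.eq_zero_or_pos s with hs | hs
        · subst hs
          have hj1 : j = 1 := by omega
          subst hj1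
          norm_num [phi_zero]
        · have h1 : phi D x s (j-1) = (1-x)^s := by
            rw [(ih (j-1) (by omega)).2 0 (by simpa using (by omega : s = j - 1))]
            rw [show j - 1 = s from by omega]
            have hs0 : (s:ℝ) ≠ 0 := by positivity
            simp [div_self hs0]
          rw [h1]
          have hjr : (j : ℝ) = (s : ℝ) + 1 := by exact_mod_cast hsj.symm
          simp only [Nat.choose_zero_right, Nat.sub_zero, pow_zero, Nat.cast_one, hjr]
          push_cast
          rw [div_self (by positivity)]
          ring
      · -- k ≥ 1
        obtain ⟨k', rfl⟩ : ∃ k', k = k'+1 := ⟨k-1, by omega⟩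
        have hk' : s = (D+1)*k' + (j + D) := by
          have : (D+1)*(k'+1) = (D+1)*k' + (D+1) := by ring
          rw [this] at hk
          omega
        have hks : k' + 1 ≤ s := by
          have : (D+1)*k' ≥ k' := Nat.le_mul_of_pos_left _ (by omega)
          omega
        have h2 := (ih (j+D) (by omega)).2 k' hk'
        have h1 : phi D x s (j-1) =
            (((j:ℝ)-1)/(s : ℝ)) * (Nat.choose s (k'+1) : ℝ) * x^(k'+1) * (1-x)^(s-(k'+1)) := by
          rcases Nat.eq_or_lt_of_le hj with hj1 | hj2
          · -- j = 1 : both sides 0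
            rw [← hj1]
            obtain ⟨t, ht⟩ : ∃ t, s = t+1 := ⟨s-1, by omega⟩
            rw [ht]
            simp [phi_succ_zero]
          · have := (ih (j-1) (by omega)).2 (k'+1) (by omega)
            rw [this]
            have hc : ((j-1 : ℕ) : ℝ) = (j : ℝ) - 1 := by
              push_cast [Nat.cast_sub (by omega : 1 ≤ j)]; ring
            rw [hc]
        rw [h1, h2]
        -- now pure algebra
        have hs1 : 1 ≤ s := by omega
        have hsub1 : s - k' = (s - (k'+1)) + 1 := by omega
        have hsub2 : s + 1 - (k'+1) = (s - (k'+1)) + 1 := by omega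
        have hpascal : ((s+1).choose (k'+1) : ℝ) = (s.choose k' : ℝ) + (s.choose (k'+1) : ℝ) := by
          rw [Nat.choose_succ_succ]
          push_cast
          ring
        have hratio : (s.choose (k'+1) : ℝ) * ((k' : ℝ)+1) = (s.choose k' : ℝ) * ((s:ℝ) - (k':ℝ)) := by
          have h := Nat.choose_succ_right_eq s k'
          have h2 : ((s.choose (k'+1) * (k'+1) : ℕ) : ℝ) = ((s.choose k' * (s - k') : ℕ) : ℝ) := by
            exact_mod_cast h
          push_cast [Nat.cast_sub (show k' ≤ s by omega)] at h2
          linarith [h2]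
        have hsr : (s : ℝ) + 1 = ((D:ℝ)+1)*((k':ℝ)+1) + (j:ℝ) := by exact_mod_cast hk
        have hsne : (s:ℝ) ≠ 0 := by positivity
        have hsne1 : (s:ℝ) + 1 ≠ 0 := by positivity
        rw [hsub1, hsub2, hpascal]
        set a := (s.choose (k'+1) : ℝ) with ha
        set b := (s.choose k' : ℝ) with hb
        set w := (1-x)^(s-(k'+1)) with hwdef
        have key : ((j:ℝ)-1)*a*((s:ℝ)+1) + ((j:ℝ)+(D:ℝ))*b*((s:ℝ)+1) = (j:ℝ)*(s:ℝ)*(a+b) := by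
          linear_combination (-((D:ℝ)+1)) * hratio + (-a-b) * hsr
        have hsner : (s:ℝ) ≠ 0 := hsne
        rw [pow_succ (1-x) (s-(k'+1)), pow_succ x k']
        push_cast
        calc (1-x) * (((j:ℝ)-1)/(s:ℝ) * a * (x^k' * x) * w)
              + x * (((j:ℝ)+(D:ℝ))/(s:ℝ) * b * x^k' * (w * (1-x)))
            = (((j:ℝ)-1)*a*((s:ℝ)+1) + ((j:ℝ)+(D:ℝ))*b*((s:ℝ)+1)) * (x^k' * x * w * (1-x))
                / ((s:ℝ)*((s:ℝ)+1)) := by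
              field_simp
          _ = ((j:ℝ)*(s:ℝ)*(a+b)) * (x^k' * x * w * (1-x)) / ((s:ℝ)*((s:ℝ)+1)) := by rw [key]
          _ = (j:ℝ)/((s:ℝ)+1) * ((b:ℝ)+a) * (x^k' * x) * (w * (1-x)) := by
              field_simp
              ring


lemma phi_vanish (D : ℕ) (x : ℝ) (s j : ℕ) (hj : 1 ≤ j) (h : ∀ k, s ≠ (D+1)*k + j) :
    phi D x s j = 0 := (phi_spec D x s j hj).1 h

lemma phi_closed (D : ℕ) (x : ℝ) (s j k : ℕ) (hj : 1 ≤ j) (h : s = (D+1)*k + j) :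
    phi D x s j = ((j : ℝ)/(s : ℝ)) * (Nat.choose s k : ℝ) * x^k * (1-x)^(s-k) :=
  (phi_spec D x s j hj).2 k h

noncomputable def Tpart (D : ℕ) (x : ℝ) (j m : ℕ) : ℝ := ∑ s ∈ range m, phi D x s j

lemma Tpart_succ (D : ℕ) (x : ℝ) (j m : ℕ) (hj : 1 ≤ j) :
    Tpart D x j (m+1) = (1-x) * Tpart D x (j-1) m + x * Tpart D x (j+D) m := by
  unfold Tpart
  rw [Finset.sum_range_succ']
  have h0 : phi D x 0 j = 0 := by rw [phi_zero]; simp [Nat.one_le_iff_ne_zero.mp hj]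
  rw [h0, add_zero]
  rw [Finset.mul_sum, Finset.mul_sum, ← Finset.sum_add_distrib]
  refine Finset.sum_congr rfl fun s _ => ?_
  rw [phi_succ, if_neg (Nat.one_le_iff_ne_zero.mp hj)]

lemma Tpart_zero_arg (D : ℕ) (x : ℝ) (m : ℕ) (hm : 1 ≤ m) : Tpart D x 0 m = 1 := by
  unfold Tpart
  obtain ⟨t, rfl⟩ : ∃ t, m = t+1 := ⟨m-1, by omega⟩
  rw [Finset.sum_range_succ']
  simp [phi_succ_zero, phi_zero]

lemma Tpart_le_one (D : ℕ) {x : ℝ} (hx0 : 0 ≤ x) (hx1 : x ≤ 1) :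
    ∀ m j, Tpart D x j m ≤ 1 := by
  intro m
  induction m with
  | zero => intro j; simp [Tpart]
  | succ m ih =>
    intro j
    rcases Nat.eq_zero_or_pos j with rfl | hj
    · rw [Tpart_zero_arg D x _ (by omega)]
    · rw [Tpart_succ D x j m hj]
      have h1 := ih (j-1)
      have h2 := ih (j+D)
      nlinarith

lemma Tpart_ge (D : ℕ) {x β : ℝ} (hx0 : 0 ≤ x) (hx1 : x ≤ 1) (hβ : 1 ≤ β) :
    ∀ m j, 1 - β^j * ((1-x)/β + x*β^D)^m ≤ Tpart D x j m := by
  intro m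
  induction m with
  | zero =>
    intro j
    simp only [pow_zero, mul_one, Tpart, Finset.range_zero, Finset.sum_empty]
    have : (1:ℝ) ≤ β^j := one_le_pow₀ hβ
    linarith
  | succ m ih =>
    intro j
    rcases Nat.eq_zero_or_pos j with rfl | hj
    · rw [Tpart_zero_arg D x _ (by omega)]
      have hβpos : (0:ℝ) < β := by linarith
      have hγ : 0 ≤ (1-x)/β + x*β^D :=
        add_nonneg (div_nonneg (by linarith) hβpos.le) (mul_nonneg hx0 (pow_nonneg hβpos.le D))
      nlinarith [pow_nonneg hγ (m+1), one_le_pow₀ hβ (n := 0+0)]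
    · rw [Tpart_succ D x j m hj]
      have h1 := ih (j-1)
      have h2 := ih (j+D)
      have hβj : β^(j-1) * β = β^j := by
        rw [← pow_succ]
        congr 1
        omega
      have hβjD : β^(j+D) = β^j * β^D := pow_add β j D
      have hβpos : (0:ℝ) < β := by linarith
      have e1 : (1-x) * Tpart D x (j-1) m ≥ (1-x) * (1 - β^(j-1) * ((1-x)/β + x*β^D)^m) := by
        apply mul_le_mul_of_nonneg_left h1 (by linarith)
      have e2 : x * Tpart D x (j+D) m ≥ x * (1 - β^(j+D) * ((1-x)/β + x*β^D)^m) := by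
        apply mul_le_mul_of_nonneg_left h2 hx0
      have calc1 : (1-x) * (1 - β^(j-1) * ((1-x)/β + x*β^D)^m)
          + x * (1 - β^(j+D) * ((1-x)/β + x*β^D)^m)
          = 1 - β^j * ((1-x)/β + x*β^D)^(m+1) := by
        rw [pow_succ]
        have : β^(j-1) = β^j / β := by
          rw [eq_div_iff (ne_of_gt hβpos), hβj]
        rw [this, hβjD]
        field_simp
        ring
      linarith


/-- Reindexing the hitting sum over times into a sum over the Fuss–Catalan index. -/
lemma Tpart_reindex (D : ℕ) (x : ℝ) (n : ℕ) :
    Tpart D x 1 ((D+1)*n + 1) = ∑ p ∈ range n, fussCatalan D p * x^p * (1-x)^(D*p+1) := by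
  induction n with
  | zero => simp [Tpart, phi_zero]
  | succ n ih =>
    have hsplit : (D+1)*(n+1) + 1 = ((D+1)*n + 1) + (D+1) := by ring
    rw [hsplit]
    unfold Tpart at *
    rw [Finset.sum_range_add, ih]
    have hblock : ∑ t ∈ range (D+1), phi D x ((D+1)*n + 1 + t) 1
        = phi D x ((D+1)*n + 1 + 0) 1 := by
      apply Finset.sum_eq_single_of_mem 0 (Finset.mem_range.mpr (by omega))
      · intro t ht htne
        have htD : t < D + 1 := Finset.mem_range.mp ht
        apply phi_vanish D x _ 1 le_rfl
        intro k heq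
        rcases le_or_gt k n with hk | hk
        · have h2 : (D+1)*k ≤ (D+1)*n := Nat.mul_le_mul_left _ hk
          set A := (D+1)*n
          set B := (D+1)*k
          omega
        · have h2 : (D+1)*(n+1) ≤ (D+1)*k := Nat.mul_le_mul_left _ hk
          have h3 : (D+1)*(n+1) = (D+1)*n + (D+1) := by ring
          set A := (D+1)*n
          set B := (D+1)*k
          omega
    rw [add_zero] at hblock
    rw [hblock, Finset.sum_range_succ]
    congr 1
    rw [phi_closed D x ((D+1)*n+1) 1 n le_rfl rfl]
    have hsub : (D+1)*n + 1 - n = D*n + 1 := by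
      have : (D+1)*n = D*n + n := by ring
      omega
    rw [hsub]
    unfold fussCatalan
    push_cast
    ring

/-- At subcritical `x`, the hitting probabilities sum to `1`. -/
lemma hasSum_one (D : ℕ) {x β : ℝ} (hx0 : 0 ≤ x) (hx1 : x ≤ 1) (hβ : 1 ≤ β)
    (hγ1 : (1-x)/β + x*β^D < 1) :
    HasSum (fun p => fussCatalan D p * x^p * (1-x)^(D*p+1)) 1 := by
  set f : ℕ → ℝ := fun p => fussCatalan D p * x^p * (1-x)^(D*p+1) with hf
  have hβpos : (0:ℝ) < β := by linarith
  set γ := (1-x)/β + x*β^D with hγ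
  have hγ0 : 0 ≤ γ :=
    add_nonneg (div_nonneg (by linarith) hβpos.le) (mul_nonneg hx0 (pow_nonneg hβpos.le D))
  have hfnn : ∀ p, 0 ≤ f p := fun p =>
    mul_nonneg (mul_nonneg (fussCatalan_nonneg D p) (pow_nonneg hx0 p))
      (pow_nonneg (by linarith) _)
  have hpartial : ∀ n, ∑ p ∈ range n, f p = Tpart D x 1 ((D+1)*n + 1) := fun n =>
    (Tpart_reindex D x n).symm
  have hbound : ∀ n, ∑ p ∈ range n, f p ≤ 1 := fun n => by
    rw [hpartial]; exact Tpart_le_one D hx0 hx1 _ _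
  have hsummable : Summable f := summable_of_sum_range_le hfnn hbound
  -- the partial sums tend to 1
  have hTtend : Tendsto (fun m => Tpart D x 1 m) atTop (𝓝 1) := by
    have hlow : ∀ m, 1 - β * γ^m ≤ Tpart D x 1 m := by
      intro m
      have := Tpart_ge D hx0 hx1 hβ m 1
      rwa [pow_one] at this
    have hgeo : Tendsto (fun m : ℕ => 1 - β * γ^m) atTop (𝓝 1) := by
      have h1 : Tendsto (fun m : ℕ => γ^m) atTop (𝓝 0) :=
        tendsto_pow_atTop_nhds_zero_of_lt_one hγ0 hγ1
      have h2 : Tendsto (fun m : ℕ => β * γ^m) atTop (𝓝 (β * 0)) := h1.const_mul β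
      rw [mul_zero] at h2
      simpa using (tendsto_const_nhds (x := (1:ℝ))).sub h2
    exact tendsto_of_tendsto_of_tendsto_of_le_of_le hgeo tendsto_const_nhds
      hlow (fun m => Tpart_le_one D hx0 hx1 m 1)
  have hmono : Tendsto (fun n : ℕ => (D+1)*n + 1) atTop atTop := by
    apply tendsto_atTop_mono (f := fun n : ℕ => n)
    · intro n
      have : n ≤ (D+1)*n := Nat.le_mul_of_pos_left n (by omega)
      omega
    · exact tendsto_id
  have hPtend : Tendsto (fun n => ∑ p ∈ range n, f p) atTop (𝓝 1) := by
    have := hTtend.comp hmono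
    simpa [Function.comp_def, hpartial] using this
  have := hsummable.hasSum.tendsto_sum_nat
  have h1 : ∑' p, f p = 1 := tendsto_nhds_unique this hPtend
  exact h1 ▸ hsummable.hasSum

/-- Monotonicity of `x(1-x)^D` on `[0, 1/(D+1)]`. -/
lemma g_mono (D : ℕ) (hD : 1 ≤ D) {a b : ℝ} (ha : 0 ≤ a) (hab : a ≤ b)
    (hb : b ≤ 1/((D:ℝ)+1)) : a*(1-a)^D ≤ b*(1-b)^D := by
  have hD1 : (1:ℝ) ≤ (D:ℝ) := by exact_mod_cast hD
  have hb2 : b ≤ 1/2 := le_trans hb (by rw [div_le_div_iff₀ (by linarith) (by norm_num)]; linarith)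
  set u := 1 - a with hu
  set v := 1 - b with hv
  have hvpos : 0 < v := by simp only [hv]; linarith
  have huv : v ≤ u := by simp only [hu, hv]; linarith
  have hupos : 0 ≤ u := le_trans hvpos.le huv
  have hb0 : 0 ≤ b := le_trans ha hab
  set S₁ := ∑ i ∈ range (D+1), u^i * v^(D - i) with hS₁
  set S₂ := ∑ i ∈ range D, u^i * v^(D-1-i) with hS₂
  have G1 : S₁ * (u - v) = u^(D+1) - v^(D+1) := by
    have := geom_sum₂_mul u v (D+1)
    simpa using this
  have G2 : S₂ * (u - v) = u^D - v^D := geom_sum₂_mul u v D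
  have hS2nn : 0 ≤ S₂ := by
    apply Finset.sum_nonneg
    intro i _
    exact mul_nonneg (pow_nonneg hupos _) (pow_nonneg hvpos.le _)
  have hS2le : S₂ ≤ (D:ℝ) * u^(D-1) := by
    calc S₂ ≤ ∑ _i ∈ range D, u^(D-1) := by
          apply Finset.sum_le_sum
          intro i hi
          have hiD : i < D := Finset.mem_range.mp hi
          calc u^i * v^(D-1-i) ≤ u^i * u^(D-1-i) := by
                exact mul_le_mul_of_nonneg_left (pow_le_pow_left₀ hvpos.le huv _)
                  (pow_nonneg hupos _)
            _ = u^(D-1) := by rw [← pow_add]; congr 1; omega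
      _ = (D:ℝ) * u^(D-1) := by rw [Finset.sum_const, Finset.card_range, nsmul_eq_mul]
  have hS1eq : S₁ = u^D + v * S₂ := by
    rw [hS₁, Finset.sum_range_succ]
    simp only [Nat.sub_self, pow_zero, mul_one]
    rw [add_comm, Finset.mul_sum]
    congr 1
    apply Finset.sum_congr rfl
    intro i hi
    have hiD : i < D := Finset.mem_range.mp hi
    rw [show D - i = (D-1-i)+1 by omega, pow_succ]
    ring
  have hid : b*v^D - a*u^D = (u - v) * (S₁ - S₂) := by
    have ha' : a = 1 - u := by rw [hu]; ring
    have hb' : b = 1 - v := by rw [hv]; ring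
    rw [ha', hb']
    linear_combination G2 - G1
  have h1 : b*((D:ℝ)+1) ≤ 1 := (le_div_iff₀ (by linarith)).mp hb
  have hubD : (D:ℝ)*b ≤ u := by simp only [hu]; nlinarith
  have e0 : v*S₂ - S₂ = -(b*S₂) := by rw [hv]; ring
  have e1 : b*S₂ ≤ b*((D:ℝ)*u^(D-1)) := mul_le_mul_of_nonneg_left hS2le hb0
  have e3 : u*u^(D-1) = u^D := by rw [← pow_succ']; congr 1; omega
  have e2 : b*((D:ℝ)*u^(D-1)) ≤ u^D := by
    rw [← e3]
    have := mul_le_mul_of_nonneg_right hubD (pow_nonneg hupos (D-1))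
    linarith [this]
  have hfin : 0 ≤ S₁ - S₂ := by
    rw [hS1eq]
    linarith
  nlinarith [mul_nonneg (by linarith : (0:ℝ) ≤ u - v) hfin]


theorem fussCatalan_series_at_critical (D : ℕ) (hD : 1 ≤ D) :
    HasSum (fun p : ℕ => fussCatalan D p * ((D : ℝ) ^ D / ((D : ℝ) + 1) ^ (D + 1)) ^ p)
      (((D : ℝ) + 1) / D) := by
  have hDr : (1:ℝ) ≤ (D:ℝ) := by exact_mod_cast hD
  have hD1pos : (0:ℝ) < (D:ℝ)+1 := by linarith
  set gc : ℝ := (D:ℝ)^D/((D:ℝ)+1)^(D+1) with hgc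
  set x₀ : ℝ := 1/((D:ℝ)+1) with hx₀
  have hx₀pos : 0 < x₀ := by rw [hx₀]; positivity
  have hx₀half : x₀ ≤ 1/2 := by
    rw [hx₀, div_le_div_iff₀ hD1pos (by norm_num)]; linarith
  have hgcx : x₀*(1-x₀)^D = gc := by
    rw [hx₀, hgc]
    have h1 : 1 - 1/((D:ℝ)+1) = (D:ℝ)/((D:ℝ)+1) := by field_simp; ring
    rw [h1, div_pow]
    rw [div_mul_div_comm, one_mul, ← pow_succ']
  -- the approximating sequence
  set ε : ℕ → ℝ := fun i => 1/((i:ℝ)+1) with hε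
  have hεpos : ∀ i, 0 < ε i := fun i => by rw [hε]; positivity
  have hεle : ∀ i, ε i ≤ 1 := fun i => by
    rw [hε]
    rw [div_le_one (by positivity)]
    simp
  set S : ℕ → ℝ := fun i => ∑ t ∈ range (D+1), (1+ε i)^t with hS
  set xs : ℕ → ℝ := fun i => 1/(S i + ε i) with hxs
  have hSge : ∀ i, (D:ℝ)+1 ≤ S i := by
    intro i
    rw [hS]
    calc (D:ℝ)+1 = ∑ _t ∈ range (D+1), (1:ℝ) := by
          rw [Finset.sum_const, Finset.card_range, nsmul_eq_mul, mul_one]; push_cast; ring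
      _ ≤ ∑ t ∈ range (D+1), (1+ε i)^t := by
          apply Finset.sum_le_sum
          intro t _
          exact one_le_pow₀ (by linarith [hεpos i])
  have hSpos : ∀ i, 0 < S i + ε i := fun i => by linarith [hSge i, hεpos i]
  have hxpos : ∀ i, 0 < xs i := fun i => by rw [hxs]; positivity
  have hxle : ∀ i, xs i ≤ x₀ := fun i => by
    rw [hxs, hx₀]
    apply one_div_le_one_div_of_le hD1pos
    linarith [hSge i, hεpos i]
  have hx1 : ∀ i, xs i ≤ 1/2 := fun i => le_trans (hxle i) hx₀half
  have h1mx : ∀ i, 0 < 1 - xs i := fun i => by linarith [hx1 i]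
  -- HasSum at each xs i
  have hasSumG : ∀ i, HasSum (fun p => fussCatalan D p * (xs i*(1-xs i)^D)^p) (1/(1-xs i)) := by
    intro i
    set β : ℝ := 1 + ε i with hβdef
    have hβ : 1 ≤ β := by rw [hβdef]; linarith [hεpos i]
    have hβpos : (0:ℝ) < β := by linarith
    have hγ1 : (1-xs i)/β + xs i*β^D < 1 := by
      have hgeom : S i * (β - 1) = β^(D+1) - 1 := by
        have := geom_sum_mul β (D+1)
        rw [hS]
        simpa using this
      have hβ1 : β - 1 = ε i := by rw [hβdef]; ring
      have hpow : β^(D+1) - 1 = ε i * S i := by rw [← hgeom, hβ1]; ring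
      have key : xs i * (β^(D+1) - 1) < ε i := by
        rw [hpow, hxs]
        rw [div_mul_eq_mul_div, one_mul, div_lt_iff₀ (hSpos i)]
        nlinarith [hεpos i, hSge i, hDr]
      have key' : xs i * β^(D+1) - xs i < ε i := by
        have : xs i * (β^(D+1) - 1) = xs i * β^(D+1) - xs i := by ring
        linarith [key, this.symm.le, this.le]
      have hrw : (1-xs i)/β + xs i*β^D = ((1-xs i) + xs i*β^(D+1))/β := by
        field_simp
        ring
      rw [hrw, div_lt_one hβpos, hβdef]
      linarith
    have h1 := hasSum_one D (hxpos i).le (by linarith [hx1 i]) hβ hγ1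
    have hfe : ∀ p : ℕ, (1-xs i)⁻¹ * (fussCatalan D p * (xs i)^p * (1-xs i)^(D*p+1))
        = fussCatalan D p * (xs i*(1-xs i)^D)^p := by
      intro p
      rw [pow_succ, pow_mul, mul_pow, ← pow_mul]
      field_simp [ne_of_gt (h1mx i)]
    have h2 := h1.mul_left (1-xs i)⁻¹
    rw [mul_one] at h2
    have hfeq : (fun p => (1-xs i)⁻¹ * (fussCatalan D p * (xs i)^p * (1-xs i)^(D*p+1)))
        = fun p => fussCatalan D p * (xs i*(1-xs i)^D)^p := funext hfe
    rw [hfeq] at h2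
    rw [one_div]
    exact h2
  -- limits
  have hεtend : Tendsto ε atTop (𝓝 0) := tendsto_one_div_add_atTop_nhds_zero_nat
  have hxtend : Tendsto xs atTop (𝓝 x₀) := by
    have hcd : Continuous (fun e : ℝ => (∑ t ∈ range (D+1), (1+e)^t) + e) := by
      apply Continuous.add _ continuous_id
      apply continuous_finset_sum
      intro t _
      exact (continuous_const.add continuous_id).pow t
    have hval : (∑ t ∈ range (D+1), ((1:ℝ)+0)^t) + 0 = (D:ℝ)+1 := by
      simp [Finset.sum_const]
    have hne : ((∑ t ∈ range (D+1), ((1:ℝ)+0)^t) + 0) ≠ 0 := by rw [hval]; positivity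
    have hcont : ContinuousAt (fun e : ℝ => 1/((∑ t ∈ range (D+1), (1+e)^t) + e)) 0 :=
      ContinuousAt.div continuousAt_const hcd.continuousAt hne
    have := hcont.tendsto.comp hεtend
    simp only [Function.comp_def] at this
    rw [hval] at this
    exact this
  have hgtend : Tendsto (fun i => xs i*(1-xs i)^D) atTop (𝓝 gc) := by
    have hc : Continuous (fun z : ℝ => z*(1-z)^D) :=
      continuous_id.mul ((continuous_const.sub continuous_id).pow D)
    have := (hc.tendsto x₀).comp hxtend
    simp only [Function.comp_def] at this
    rwa [hgcx] at this
  have h1mx₀ : (0:ℝ) < 1 - x₀ := by linarith [hx₀half]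
  have hinvval : 1/(1-x₀) = ((D:ℝ)+1)/(D:ℝ) := by
    rw [hx₀]
    have h1 : 1 - 1/((D:ℝ)+1) = (D:ℝ)/((D:ℝ)+1) := by field_simp; ring
    rw [h1, one_div_div]
  have hinvtend : Tendsto (fun i => 1/(1-xs i)) atTop (𝓝 (((D:ℝ)+1)/(D:ℝ))) := by
    have hcont : ContinuousAt (fun z : ℝ => 1/(1-z)) x₀ :=
      ContinuousAt.div continuousAt_const (continuous_const.sub continuous_id).continuousAt
        (ne_of_gt h1mx₀)
    have := hcont.tendsto.comp hxtend
    simp only [Function.comp_def] at this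
    rwa [hinvval] at this
  -- bounds
  have hgle : ∀ i, xs i*(1-xs i)^D ≤ gc := by
    intro i
    rw [← hgcx]
    exact g_mono D hD (hxpos i).le (hxle i) (le_of_eq (by rw [hx₀]))
  have hgnn : ∀ i, 0 ≤ xs i*(1-xs i)^D := fun i =>
    mul_nonneg (hxpos i).le (pow_nonneg (h1mx i).le D)
  have hgcnn : (0:ℝ) ≤ gc := by rw [hgc]; positivity
  have hinvle : ∀ i, 1/(1-xs i) ≤ ((D:ℝ)+1)/(D:ℝ) := by
    intro i
    rw [← hinvval]
    apply one_div_le_one_div_of_le h1mx₀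
    linarith [hxle i]
  set a : ℕ → ℝ := fun p => fussCatalan D p * gc^p with ha
  have hann : ∀ p, 0 ≤ a p := fun p =>
    mul_nonneg (fussCatalan_nonneg D p) (pow_nonneg hgcnn p)
  have hpb : ∀ n, ∑ p ∈ range n, a p ≤ ((D:ℝ)+1)/(D:ℝ) := by
    intro n
    have htendn : Tendsto (fun i => ∑ p ∈ range n, fussCatalan D p * (xs i*(1-xs i)^D)^p)
        atTop (𝓝 (∑ p ∈ range n, a p)) := by
      apply tendsto_finset_sum
      intro p _
      exact (hgtend.pow p).const_mul _
    apply le_of_tendsto htendn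
    filter_upwards with i
    calc ∑ p ∈ range n, fussCatalan D p * (xs i*(1-xs i)^D)^p
        ≤ 1/(1-xs i) := by
          apply sum_le_hasSum (range n) _ (hasSumG i)
          intro p _
          exact mul_nonneg (fussCatalan_nonneg D p) (pow_nonneg (hgnn i) p)
      _ ≤ ((D:ℝ)+1)/(D:ℝ) := hinvle i
  have hsum : Summable a := summable_of_sum_range_le hann hpb
  have hub : ∑' p, a p ≤ ((D:ℝ)+1)/(D:ℝ) := hsum.tsum_le_of_sum_range_le hpb
  have hlb : ∀ i, 1/(1-xs i) ≤ ∑' p, a p := by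
    intro i
    apply hasSum_le _ (hasSumG i) hsum.hasSum
    intro p
    exact mul_le_mul_of_nonneg_left (pow_le_pow_left₀ (hgnn i) (hgle i) p)
      (fussCatalan_nonneg D p)
  have hge : ((D:ℝ)+1)/(D:ℝ) ≤ ∑' p, a p :=
    le_of_tendsto hinvtend (Eventually.of_forall hlb)
  have heq : ∑' p, a p = ((D:ℝ)+1)/(D:ℝ) := le_antisymm hub hge
  exact heq ▸ hsum.hasSum
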